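/- Let κ be a regular uncountable cardinal, G a topological group, and H a subgroup of G with |H| ≤ 2^(2^κ). Let D be the union over all subsets A of H of cardinality at most κ of the closures of A in G. Then D is a subgroup of G containing H, and if each such closure has cardinality at most 2^(2^κ), then |D| ≤ 2^(2^κ). -/

import Mathlib

open Cardinal Set Pointwise

theorem kappa_closure_subgroup {G : Type u} [Group G] [TopologicalSpace G]
    [IsTopologicalGroup G] [T2Space G] (κ : Cardinal.{u}) (hreg : κ.IsRegular)
    (hunc : Cardinal.aleph0 < κ) (H : Subgroup G)
    (hH : Cardinal.mk H ≤ (2 : Cardinal) ^ ((2 : Cardinal) ^ κ)) (D : Set G)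
    (hD : D = ⋃ A ∈ {A : Set G | A ⊆ (H : Set G) ∧ Cardinal.mk A ≤ κ}, closure A) :
    (∃ S : Subgroup G, (S : Set G) = D) ∧ (H : Set G) ⊆ D ∧
      ((∀ A : Set G, A ⊆ (H : Set G) → Cardinal.mk A ≤ κ →
          Cardinal.mk (closure A) ≤ (2 : Cardinal) ^ ((2 : Cardinal) ^ κ)) →
        Cardinal.mk D ≤ (2 : Cardinal) ^ ((2 : Cardinal) ^ κ)) := by
  have hκ : Cardinal.aleph0 ≤ κ := hunc.le
  have hmemD : ∀ x, x ∈ D ↔ ∃ A : Set G, (A ⊆ (H : Set G) ∧ Cardinal.mk A ≤ κ) ∧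
      x ∈ closure A := by
    intro x; rw [hD]; simp [Set.mem_iUnion]
  refine ⟨?_, ?_, ?_⟩
  · refine ⟨⟨⟨⟨D, ?_⟩, ?_⟩, ?_⟩, rfl⟩
    · -- mul_mem
      rintro a b ha hb
      rw [hmemD] at ha hb ⊢
      obtain ⟨A, ⟨hAH, hAκ⟩, haA⟩ := ha
      obtain ⟨B, ⟨hBH, hBκ⟩, hbB⟩ := hb
      refine ⟨A * B, ⟨?_, ?_⟩, ?_⟩
      · rintro _ ⟨x, hx, y, hy, rfl⟩
        exact mul_mem (hAH hx) (hBH hy)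
      · have : Cardinal.mk ↥(A * B) ≤ Cardinal.mk A * Cardinal.mk B := by
          have : A * B = (fun p : A × B => (p.1 : G) * p.2) '' Set.univ := by
            ext z
            constructor
            · rintro ⟨x, hx, y, hy, rfl⟩
              exact ⟨⟨⟨x, hx⟩, ⟨y, hy⟩⟩, trivial, rfl⟩
            · rintro ⟨⟨⟨x, hx⟩, ⟨y, hy⟩⟩, -, rfl⟩
              exact ⟨x, hx, y, hy, rfl⟩
          rw [this]
          calc Cardinal.mk _ ≤ Cardinal.mk (Set.univ : Set (A × B)) := mk_image_le
          _ = Cardinal.mk (A × B) := mk_univ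
          _ = Cardinal.mk A * Cardinal.mk B := by simp [mk_prod]
        refine this.trans ?_
        calc Cardinal.mk A * Cardinal.mk B ≤ κ * κ := mul_le_mul' hAκ hBκ
        _ = κ := mul_eq_self hκ
      · exact map_mem_closure₂ continuous_mul haA hbB
          (fun x hx y hy => Set.mul_mem_mul hx hy)
    · -- one_mem
      rw [hmemD]
      refine ⟨{1}, ⟨?_, ?_⟩, subset_closure rfl⟩
      · simpa using H.one_mem
      · simpa using (one_le_aleph0.trans hκ)
    · -- inv_mem
      intro a ha
      rw [hmemD] at ha ⊢
      obtain ⟨A, ⟨hAH, hAκ⟩, haA⟩ := ha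
      refine ⟨A⁻¹, ⟨?_, ?_⟩, ?_⟩
      · rintro x hx
        exact H.inv_mem_iff.mp (hAH hx)
      · have : A⁻¹ = Inv.inv '' A := (Set.image_inv_eq_inv).symm
        rw [this]
        exact mk_image_le.trans hAκ
      · rw [← inv_closure]
        exact Set.inv_mem_inv.mpr haA
  · -- H ⊆ D
    intro x hx
    rw [hmemD]
    exact ⟨{x}, ⟨by simpa using hx, by simpa using (one_le_aleph0.trans hκ)⟩,
      subset_closure rfl⟩
  · -- cardinality
    intro hcl
    rw [hD]
    set s : Set (Set G) := {A : Set G | A ⊆ (H : Set G) ∧ Cardinal.mk A ≤ κ}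
    have hbound := mk_biUnion_le (fun A : Set G => closure A) s
    refine hbound.trans ?_
    have h2 : (2 : Cardinal.{u}) ≤ 2 ^ (2:Cardinal.{u}) ^ κ := by
      calc (2:Cardinal.{u}) = 2 ^ (1:Cardinal) := (power_one 2).symm
      _ ≤ 2 ^ (2:Cardinal.{u}) ^ κ :=
        power_le_power_left two_ne_zero (by
          calc (1:Cardinal.{u}) ≤ 2 := one_le_two
          _ = 2 ^ (1:Cardinal) := (power_one 2).symm
          _ ≤ 2 ^ κ := power_le_power_left two_ne_zero (one_le_aleph0.trans hκ))
    have haleph : Cardinal.aleph0 ≤ (2:Cardinal.{u}) ^ (2:Cardinal.{u}) ^ κ := by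
      calc Cardinal.aleph0 ≤ κ := hκ
      _ ≤ 2 ^ κ := (cantor κ).le
      _ ≤ 2 ^ (2:Cardinal.{u}) ^ κ := power_le_power_left two_ne_zero (cantor κ).le
    have hs : Cardinal.mk s ≤ (2:Cardinal.{u}) ^ (2:Cardinal.{u}) ^ κ := by
      have := mk_bounded_subset_le (H : Set G) κ
      have hmax : max (Cardinal.mk (H : Set G)) Cardinal.aleph0 ≤
          (2:Cardinal.{u}) ^ (2:Cardinal.{u}) ^ κ := max_le hH haleph
      calc Cardinal.mk s ≤ max (Cardinal.mk (H : Set G)) Cardinal.aleph0 ^ κ := this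
      _ ≤ ((2:Cardinal.{u}) ^ (2:Cardinal.{u}) ^ κ) ^ κ :=
        power_le_power_right hmax
      _ = (2:Cardinal.{u}) ^ ((2:Cardinal.{u}) ^ κ * κ) := (power_mul ..).symm
      _ = (2:Cardinal.{u}) ^ (2:Cardinal.{u}) ^ κ := by
        congr 1
        exact mul_eq_left (hκ.trans (cantor κ).le) (cantor κ).le hreg.pos.ne'
    have hsup : ⨆ A : s, Cardinal.mk (closure (A : Set G)) ≤
        (2:Cardinal.{u}) ^ (2:Cardinal.{u}) ^ κ := by
      refine ciSup_le' ?_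
      rintro ⟨A, hAH, hAκ⟩
      exact hcl A hAH hAκ
    calc Cardinal.mk s * ⨆ A : s, Cardinal.mk (closure (A : Set G))
        ≤ ((2:Cardinal.{u}) ^ (2:Cardinal.{u}) ^ κ) * ((2:Cardinal.{u}) ^ (2:Cardinal.{u}) ^ κ) :=
          mul_le_mul' hs hsup
      _ = (2:Cardinal.{u}) ^ (2:Cardinal.{u}) ^ κ := mul_eq_self haleph
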